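/- A direct sum of Mittag-Leffler modules is Mittag-Leffler, and a pure submodule of a Mittag-Leffler module is Mittag-Leffler. -/

import Mathlib

/-!
STATEMENT 2: A direct sum of Mittag-Leffler modules is Mittag-Leffler, and a pure
submodule of a Mittag-Leffler module is Mittag-Leffler.
-/

open TensorProduct DirectSum

universe u v

/-- The canonical map `M ⊗ (∏ i, L i) → ∏ i (M ⊗ L i)`. -/
noncomputable def canonicalTensorPi (R : Type u) [CommRing R]
    (M : Type v) [AddCommGroup M] [Module R M]
    (ι : Type v) (L : ι → Type v) [∀ i, AddCommGroup (L i)] [∀ i, Module R (L i)] :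
    TensorProduct R M (∀ i, L i) →ₗ[R] ∀ i, TensorProduct R M (L i) :=
  LinearMap.pi fun i => LinearMap.lTensor M (LinearMap.proj i)

/-- `M` is Mittag-Leffler: for every family of modules `L i`, the canonical map
`M ⊗ ∏ L i → ∏ (M ⊗ L i)` is injective. -/
def IsMittagLeffler (R : Type u) [CommRing R]
    (M : Type v) [AddCommGroup M] [Module R M] : Prop :=
  ∀ (ι : Type v) (L : ι → Type v) [∀ i, AddCommGroup (L i)] [∀ i, Module R (L i)],
    Function.Injective (canonicalTensorPi R M ι L)

/-- A submodule `N ≤ M` is pure if `N ⊗ L → M ⊗ L` is injective for every module `L`. -/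
def IsPureSubmodule (R : Type u) [CommRing R]
    (M : Type v) [AddCommGroup M] [Module R M] (N : Submodule R M) : Prop :=
  ∀ (L : Type v) [AddCommGroup L] [Module R L],
    Function.Injective (LinearMap.rTensor L N.subtype)

section Aux

variable (R : Type u) [CommRing R]

/-- The canonical map `⨁ j, ∏ i, A j i → ∏ i, ⨁ j, A j i`. -/
noncomputable def dsToPi {J ι : Type v} [DecidableEq J]
    (A : J → ι → Type v) [∀ j i, AddCommGroup (A j i)] [∀ j i, Module R (A j i)] :
    (⨁ j, ∀ i, A j i) →ₗ[R] ∀ i, ⨁ j, A j i :=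
  DirectSum.toModule R J _ fun j =>
    LinearMap.pi fun i => (DirectSum.lof R J (fun j => A j i) j).comp (LinearMap.proj i)

theorem dsToPi_apply {J ι : Type v} [DecidableEq J]
    (A : J → ι → Type v) [∀ j i, AddCommGroup (A j i)] [∀ j i, Module R (A j i)]
    (x : ⨁ j, ∀ i, A j i) (i : ι) (j : J) :
    dsToPi R A x i j = x j i := by
  induction x using DirectSum.induction_on with
  | zero => simp [dsToPi]
  | of j' a =>
    rw [dsToPi, ← DirectSum.lof_eq_of R, DirectSum.toModule_lof]
    by_cases h : j' = j
    · subst h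
      simp [DirectSum.lof_eq_of, DirectSum.of_eq_same]
    · simp [DirectSum.lof_eq_of, DirectSum.of_eq_of_ne _ _ _ (Ne.symm h)]
  | add x y hx hy =>
    simp only [map_add, DirectSum.add_apply, Pi.add_apply, hx, hy]

theorem dsToPi_injective {J ι : Type v} [DecidableEq J]
    (A : J → ι → Type v) [∀ j i, AddCommGroup (A j i)] [∀ j i, Module R (A j i)] :
    Function.Injective (dsToPi R A) := by
  rw [injective_iff_map_eq_zero]
  intro x hx
  refine DFinsupp.ext fun j => funext fun i => ?_
  have := dsToPi_apply R A x i j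
  rw [congrFun hx i] at this
  simpa using this.symm

end Aux

theorem directSum_and_pure_submodule_mittagLeffler (R : Type u) [CommRing R] :
    (∀ (ι : Type v) [DecidableEq ι] (M : ι → Type v)
        [∀ i, AddCommGroup (M i)] [∀ i, Module R (M i)],
        (∀ i, IsMittagLeffler R (M i)) → IsMittagLeffler R (⨁ i, M i)) ∧
    (∀ (M : Type v) [AddCommGroup M] [Module R M] (N : Submodule R M),
        IsPureSubmodule R M N → IsMittagLeffler R M → IsMittagLeffler R N) := by
  constructor
  · intro J _ M _ _ hM ι L _ _
    -- composite map
    set e1 : TensorProduct R (⨁ j, M j) (∀ i, L i) ≃ₗ[R] ⨁ j, TensorProduct R (M j) (∀ i, L i) :=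
      TensorProduct.directSumLeft R R M (∀ i, L i) with he1
    set φ : (⨁ j, TensorProduct R (M j) (∀ i, L i)) →ₗ[R]
        ⨁ j, ∀ i, TensorProduct R (M j) (L i) :=
      DFinsupp.mapRange.linearMap (fun j => canonicalTensorPi R (M j) ι L) with hφ
    set ψ : (⨁ j, ∀ i, TensorProduct R (M j) (L i)) →ₗ[R]
        ∀ i, ⨁ j, TensorProduct R (M j) (L i) :=
      dsToPi R (fun j i => TensorProduct R (M j) (L i)) with hψ
    set e2 : (∀ i, ⨁ j, TensorProduct R (M j) (L i)) →ₗ[R]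
        ∀ i, TensorProduct R (⨁ j, M j) (L i) :=
      LinearMap.pi (fun i =>
        ((TensorProduct.directSumLeft R R M (L i)).symm : (⨁ j, TensorProduct R (M j) (L i)) →ₗ[R] _).comp
          (LinearMap.proj i)) with he2
    have hcomp : (canonicalTensorPi R (⨁ j, M j) ι L : TensorProduct R (⨁ j, M j) (∀ i, L i) → _)
        = e2 ∘ ψ ∘ φ ∘ e1 := by
      funext z
      show canonicalTensorPi R (⨁ j, M j) ι L z = e2 (ψ (φ (e1 z)))
      induction z using TensorProduct.induction_on with
      | zero => simp
      | add x y hx hy => simp only [map_add, hx, hy]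
      | tmul m p =>
        induction m using DirectSum.induction_on with
        | zero => simp
        | add x y hx hy => simp only [TensorProduct.add_tmul, map_add, hx, hy]
        | of j x =>
          funext i
          rw [← DirectSum.lof_eq_of R]
          simp only [canonicalTensorPi, LinearMap.pi_apply, LinearMap.lTensor_tmul,
            LinearMap.proj_apply, he1]
          rw [TensorProduct.directSumLeft_tmul_lof]
          have hφa : φ (DirectSum.lof R J (fun j => TensorProduct R (M j) (∀ i, L i)) j
              (x ⊗ₜ[R] p)) = DirectSum.lof R J (fun j => ∀ i, TensorProduct R (M j) (L i)) j
              (canonicalTensorPi R (M j) ι L (x ⊗ₜ[R] p)) := by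
            exact DFinsupp.mapRange_single (hf := fun j => map_zero _)
          rw [hφa]
          have hψa : ψ (DirectSum.lof R J (fun j => ∀ i, TensorProduct R (M j) (L i)) j
              (canonicalTensorPi R (M j) ι L (x ⊗ₜ[R] p))) i
              = DirectSum.lof R J (fun j => TensorProduct R (M j) (L i)) j
                (x ⊗ₜ[R] p i) := by
            rw [hψ, dsToPi, DirectSum.toModule_lof]
            show DirectSum.lof R J (fun j => TensorProduct R (M j) (L i)) j
                (canonicalTensorPi R (M j) ι L (x ⊗ₜ[R] p) i) = _
            simp [canonicalTensorPi]
          simp only [he2, LinearMap.pi_apply, LinearMap.comp_apply, LinearMap.proj_apply,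
            LinearMap.coe_coe]
          rw [hψa]
          exact (TensorProduct.directSumLeft_symm_lof_tmul (R := R) (S := R) j x (p i)).symm
    rw [hcomp]
    refine Function.Injective.comp ?_ (Function.Injective.comp ?_
      (Function.Injective.comp ?_ e1.injective))
    · intro a b hab
      funext i
      have h := congrFun hab i
      simp only [he2, LinearMap.pi_apply, LinearMap.comp_apply, LinearMap.proj_apply,
        LinearMap.coe_coe] at h
      exact (TensorProduct.directSumLeft R R M (L i)).symm.injective h
    · exact dsToPi_injective R _
    · -- injectivity of mapRange
      rw [injective_iff_map_eq_zero]
      intro x hx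
      refine DFinsupp.ext fun j => ?_
      have : φ x j = 0 := by rw [hx]; rfl
      simp only [hφ, DFinsupp.mapRange.linearMap_apply, DFinsupp.mapRange_apply] at this
      have hz : canonicalTensorPi R (M j) ι L (x j) = 0 := this
      have := ((injective_iff_map_eq_zero _).mp (hM j ι L)) (x j) hz
      simpa using this
  · intro M _ _ N hpure hML ι L _ _
    have hcomm : (LinearMap.pi fun i =>
          (LinearMap.rTensor (L i) N.subtype).comp (LinearMap.proj i) :
          (∀ i, TensorProduct R N (L i)) →ₗ[R] ∀ i, TensorProduct R M (L i)).comp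
          (canonicalTensorPi R N ι L)
        = (canonicalTensorPi R M ι L).comp (LinearMap.rTensor (∀ i, L i) N.subtype) := by
      apply TensorProduct.ext'
      intro n p
      funext i
      simp [canonicalTensorPi]
    have hinj : Function.Injective
        ((canonicalTensorPi R M ι L).comp (LinearMap.rTensor (∀ i, L i) N.subtype)) :=
      (hML ι L).comp (hpure (∀ i, L i))
    rw [← hcomm, LinearMap.coe_comp] at hinj
    exact Function.Injective.of_comp hinj
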